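/- arXiv:1902.00973 — 3 statements merged into one kernel-verified Lean document; each statement's English description precedes it below -/
import Mathlib

section
/- Let n ≥ 1 and let κ, λ, μ, ν be partitions of length at most n such that μ_i ≤ λ_i for all i and ν_i + kμ_i ≤ κ_i + kλ_i for all i, for some positive integer k. Let V = {v_1,…,v_R} be the set of extreme points of the Gelfand–Tsetlin polytope GT_{λ/μ} (all of which are integral arrays). Then there exists an integer r ≥ 0 such that for all l ≥ r: s_{(κ+(l+R)λ)/(ν+(l+R)μ)}(x) = Σ_{∅≠I⊆[R]} (−1)^{1+|I|} · x^{Σ_{i∈I} w(v_i)} · s_{(κ+(l+R−|I|)λ)/(ν+(l+R−|I|)μ)}(x); that is, the sequence {s_{(κ+lλ)/(ν+lμ)}(x)}_{l≥r} satisfies a linear recursion with characteristic polynomial ∏_{v∈V} (X − x^{w(v)}). -/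
open scoped BigOperators Pointwise

noncomputable section

/-- The Gelfand–Tsetlin polytope of shape `λ/μ`: arrays with top row `λ` and bottom row `μ`
(written in weakly increasing order) that weakly increase in north-east and south-east
direction. -/
def GTPolytope (n : ℕ) (lam mu : Fin n → ℕ) : Set (Fin (n + 1) → Fin n → ℝ) :=
  {x | (∀ j : Fin n, x 0 j = (lam j.rev : ℝ)) ∧
       (∀ j : Fin n, x (Fin.last n) j = (mu j.rev : ℝ)) ∧
       (∀ (i j : Fin n), x i.succ j ≤ x i.castSucc j) ∧
       (∀ (i j : Fin n) (h : (j : ℕ) + 1 < n), x i.castSucc j ≤ x i.succ ⟨(j : ℕ) + 1, h⟩)}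

/-- The weight of a (real) Gelfand–Tsetlin pattern. -/
def gtWeight {n : ℕ} (x : Fin (n + 1) → Fin n → ℝ) : Fin n → ℝ :=
  fun i => ∑ j, (x i.castSucc j - x i.succ j)

/-- The weight of an integral Gelfand–Tsetlin pattern. -/
def gtWeightInt {n : ℕ} (p : Fin (n + 1) → Fin n → ℤ) : Fin n → ℤ :=
  fun i => ∑ j, (p i.castSucc j - p i.succ j)

/-- Coercion of an integral pattern to a real one. -/
def patC {n : ℕ} (p : Fin (n + 1) → Fin n → ℤ) : Fin (n + 1) → Fin n → ℝ :=
  fun i j => (p i j : ℝ)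

/-- The skew Schur polynomial `s_{λ/μ} = ∑_p x^{w(p)}`, the sum over all integral
Gelfand–Tsetlin patterns of shape `λ/μ`. -/
def skewSchur (n : ℕ) (lam mu : Fin n → ℕ) : MvPolynomial (Fin n) ℂ :=
  ∑ᶠ p ∈ {p : Fin (n + 1) → Fin n → ℤ | patC p ∈ GTPolytope n lam mu},
    MvPolynomial.monomial (Finsupp.equivFunOnFinite.symm (fun i => (gtWeightInt p i).toNat)) (1 : ℂ)

namespace SchurAux

variable {n : ℕ}

/-- Index type for the homogeneous difference constraints of a GT pattern. -/
def DIdx (n : ℕ) : Type := (Fin n × Fin n) ⊕ { q : Fin n × Fin n // (q.2 : ℕ) + 1 < n }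

instance : Fintype (DIdx n) := by unfold DIdx; infer_instance
instance : DecidableEq (DIdx n) := by unfold DIdx; infer_instance

/-- The difference functional (real version). -/
def dfun : DIdx n → (Fin (n + 1) → Fin n → ℝ) → ℝ
  | .inl q => fun x => x q.1.castSucc q.2 - x q.1.succ q.2
  | .inr q => fun x => x q.1.1.succ ⟨(q.1.2 : ℕ) + 1, q.2⟩ - x q.1.1.castSucc q.1.2

/-- The difference functional (integer version). -/
def dint : DIdx n → (Fin (n + 1) → Fin n → ℤ) → ℤ
  | .inl q => fun p => p q.1.castSucc q.2 - p q.1.succ q.2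
  | .inr q => fun p => p q.1.1.succ ⟨(q.1.2 : ℕ) + 1, q.2⟩ - p q.1.1.castSucc q.1.2

lemma dfun_patC (d : DIdx n) (p : Fin (n + 1) → Fin n → ℤ) :
    dfun d (patC p) = (dint d p : ℝ) := by
  cases d <;> simp [dfun, dint, patC]

lemma mem_GT_iff (α β : Fin n → ℕ) (x : Fin (n + 1) → Fin n → ℝ) :
    x ∈ GTPolytope n α β ↔
      (∀ j : Fin n, x 0 j = (α j.rev : ℝ)) ∧
      (∀ j : Fin n, x (Fin.last n) j = (β j.rev : ℝ)) ∧
      (∀ d : DIdx n, 0 ≤ dfun d x) := by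
  constructor
  · rintro ⟨h1, h2, h3, h4⟩
    refine ⟨h1, h2, fun d => ?_⟩
    cases d with
    | inl q => simpa [dfun, sub_nonneg] using h3 q.1 q.2
    | inr q => simpa [dfun, sub_nonneg] using h4 q.1.1 q.1.2 q.2
  · rintro ⟨h1, h2, h3⟩
    refine ⟨h1, h2, fun i j => ?_, fun i j h => ?_⟩
    · simpa [dfun, sub_nonneg] using h3 (.inl (i, j))
    · simpa [dfun, sub_nonneg] using h3 (.inr ⟨(i, j), h⟩)

/-- Integer-level pattern predicate. -/
def IsPat (α β : Fin n → ℕ) (p : Fin (n + 1) → Fin n → ℤ) : Prop :=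
  (∀ j : Fin n, p 0 j = (α j.rev : ℤ)) ∧
  (∀ j : Fin n, p (Fin.last n) j = (β j.rev : ℤ)) ∧
  (∀ d : DIdx n, 0 ≤ dint d p)

lemma isPat_iff (α β : Fin n → ℕ) (p : Fin (n + 1) → Fin n → ℤ) :
    IsPat α β p ↔ patC p ∈ GTPolytope n α β := by
  rw [mem_GT_iff]
  constructor
  · rintro ⟨h1, h2, h3⟩
    refine ⟨fun j => by simp [patC, h1 j], fun j => by simp [patC, h2 j], fun d => ?_⟩
    rw [dfun_patC]; exact_mod_cast h3 d
  · rintro ⟨h1, h2, h3⟩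
    refine ⟨fun j => ?_, fun j => ?_, fun d => ?_⟩
    · have := h1 j; simp only [patC] at this; exact_mod_cast this
    · have := h2 j; simp only [patC] at this; exact_mod_cast this
    · have := h3 d; rw [dfun_patC] at this; exact_mod_cast this

/-- coordinatewise bounds on points of the polytope -/
lemma coord_bounds (α β : Fin n → ℕ) {x : Fin (n + 1) → Fin n → ℝ}
    (hx : x ∈ GTPolytope n α β) (i : Fin (n + 1)) (j : Fin n) :
    (β j.rev : ℝ) ≤ x i j ∧ x i j ≤ (α j.rev : ℝ) := by
  obtain ⟨h1, h2, h3, _⟩ := hx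
  constructor
  · induction i using Fin.reverseInduction with
    | last => rw [h2 j]
    | cast i ih => exact le_trans ih (h3 i j)
  · induction i using Fin.induction with
    | zero => rw [h1 j]
    | succ i ih => exact le_trans (h3 i j) ih

end SchurAux

namespace SchurAux

variable {n : ℕ}

lemma patSet_finite (α β : Fin n → ℕ) :
    {p : Fin (n + 1) → Fin n → ℤ | patC p ∈ GTPolytope n α β}.Finite := by
  apply Set.Finite.subset (Set.finite_Icc
    (fun (_ : Fin (n+1)) (j : Fin n) => (0 : ℤ)) (fun (_ : Fin (n+1)) (j : Fin n) => (α j.rev : ℤ)))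
  intro p hp
  simp only [Set.mem_Icc, Pi.le_def]
  constructor
  · intro i j
    have := (coord_bounds α β hp i j).1
    simp only [patC] at this
    have h0 : (0 : ℝ) ≤ (p i j : ℝ) := le_trans (by positivity) this
    exact_mod_cast h0
  · intro i j
    have := (coord_bounds α β hp i j).2
    simp only [patC] at this
    exact_mod_cast this

/-- The finite set of integral patterns of a given shape. -/
def patFinset (α β : Fin n → ℕ) : Finset (Fin (n + 1) → Fin n → ℤ) :=
  (patSet_finite α β).toFinset

lemma mem_patFinset (α β : Fin n → ℕ) (p : Fin (n + 1) → Fin n → ℤ) :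
    p ∈ patFinset α β ↔ IsPat α β p := by
  rw [patFinset, Set.Finite.mem_toFinset, Set.mem_setOf_eq, isPat_iff]

/-- the exponent Finsupp of a pattern -/
def wt (p : Fin (n + 1) → Fin n → ℤ) : Fin n →₀ ℕ :=
  Finsupp.equivFunOnFinite.symm (fun i => (gtWeightInt p i).toNat)

lemma skewSchur_eq (α β : Fin n → ℕ) :
    skewSchur n α β = ∑ p ∈ patFinset α β, MvPolynomial.monomial (wt p) (1 : ℂ) := by
  have h : {p : Fin (n + 1) → Fin n → ℤ | patC p ∈ GTPolytope n α β} = ↑(patFinset α β) := by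
    rw [patFinset, Set.Finite.coe_toFinset]
  rw [skewSchur, h, finsum_mem_coe_finset]
  rfl

lemma gtWeightInt_add (p q : Fin (n + 1) → Fin n → ℤ) (i : Fin n) :
    gtWeightInt (p + q) i = gtWeightInt p i + gtWeightInt q i := by
  simp only [gtWeightInt, Pi.add_apply, ← Finset.sum_add_distrib]
  congr 1; ext j; ring

lemma gtWeightInt_nonneg {α β : Fin n → ℕ} {p : Fin (n + 1) → Fin n → ℤ}
    (hp : IsPat α β p) (i : Fin n) : 0 ≤ gtWeightInt p i :=
  Finset.sum_nonneg fun j _ => by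
    have := hp.2.2 (.inl (i, j)); simp only [dint] at this; linarith

lemma dint_add (d : DIdx n) (p q : Fin (n + 1) → Fin n → ℤ) :
    dint d (p + q) = dint d p + dint d q := by
  cases d <;> simp [dint] <;> ring

lemma dint_sum (d : DIdx n) {ι : Type*} (s : Finset ι) (f : ι → (Fin (n + 1) → Fin n → ℤ)) :
    dint d (∑ i ∈ s, f i) = ∑ i ∈ s, dint d (f i) := by
  classical
  induction s using Finset.induction with
  | empty => cases d <;> simp [dint]
  | @insert _ _ hx ih => rw [Finset.sum_insert hx, Finset.sum_insert hx, dint_add, ih]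

end SchurAux

namespace SchurAux

variable {n : ℕ}

/-- The face of the GT polytope where all constraints in `T` are tight. -/
def QT (lam mu : Fin n → ℕ) (T : Finset (DIdx n)) : Set (Fin (n + 1) → Fin n → ℝ) :=
  {x | x ∈ GTPolytope n lam mu ∧ ∀ d ∈ T, dfun d x = 0}

lemma dfun_smul (d : DIdx n) (c : ℝ) (x : Fin (n + 1) → Fin n → ℝ) :
    dfun d (c • x) = c * dfun d x := by
  cases d <;> simp [dfun] <;> ring

lemma dfun_continuous (d : DIdx n) : Continuous (dfun d) := by
  cases d <;> simp only [dfun] <;> fun_prop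

lemma exists_r_of_QT_empty (kap lam mu nu : Fin n → ℕ) (T : Finset (DIdx n)) (B : ℝ)
    (hQT : QT lam mu T = ∅) :
    ∃ r : ℕ, ∀ m : ℕ, r ≤ m →
      ∀ x ∈ GTPolytope n (fun i => kap i + m * lam i) (fun i => nu i + m * mu i),
        ∃ d ∈ T, B ≤ dfun d x := by
  by_contra hcon
  push_neg at hcon
  choose m hm x hx hlt using hcon
  have hM1 : ∀ r : ℕ, 1 ≤ m (r + 1) := fun r => le_trans (Nat.succ_le_succ (Nat.zero_le r)) (hm (r + 1))
  have hMpos : ∀ r : ℕ, (0 : ℝ) < ((m (r + 1) : ℕ) : ℝ) := fun r => by exact_mod_cast hM1 r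
  set y : ℕ → (Fin (n + 1) → Fin n → ℝ) := fun r => ((m (r + 1) : ℝ))⁻¹ • x (r + 1) with hy
  -- membership in a fixed compact box
  have hybox : ∀ r, y r ∈ Set.Icc (fun (_ : Fin (n + 1)) (_ : Fin n) => (0 : ℝ))
      (fun (_ : Fin (n + 1)) (j : Fin n) => ((kap j.rev : ℝ) + (lam j.rev : ℝ))) := by
    intro r
    have hb := coord_bounds _ _ (hx (r + 1))
    rw [Set.mem_Icc]
    constructor <;> rw [Pi.le_def] <;> intro i <;> rw [Pi.le_def] <;> intro j
    · have h1 := (hb i j).1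
      have h0 : (0 : ℝ) ≤ x (r + 1) i j := le_trans (by positivity) h1
      have : (0:ℝ) ≤ ((m (r + 1) : ℝ))⁻¹ * x (r + 1) i j := by positivity
      simpa [hy] using this
    · have h2 := (hb i j).2
      have h2' : x (r + 1) i j ≤ (kap j.rev : ℝ) + ((m (r + 1) : ℕ) : ℝ) * (lam j.rev : ℝ) := by
        refine le_trans h2 (le_of_eq ?_)
        push_cast
        ring
      have hMinv : (0:ℝ) ≤ ((m (r + 1) : ℝ))⁻¹ := by positivity
      have hmul : ((m (r + 1) : ℝ))⁻¹ * x (r + 1) i j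
          ≤ ((m (r + 1) : ℝ))⁻¹ * ((kap j.rev : ℝ) + ((m (r + 1) : ℕ) : ℝ) * (lam j.rev : ℝ)) :=
        mul_le_mul_of_nonneg_left h2' hMinv
      have hre : ((m (r + 1) : ℝ))⁻¹ * ((kap j.rev : ℝ) + ((m (r + 1) : ℕ) : ℝ) * (lam j.rev : ℝ))
          = ((m (r + 1) : ℝ))⁻¹ * (kap j.rev : ℝ) + (lam j.rev : ℝ) := by
        field_simp
        rw [add_div, mul_div_cancel_left₀ _ (ne_of_gt (hMpos r))]
      have hle2 : ((m (r + 1) : ℝ))⁻¹ * (kap j.rev : ℝ) + (lam j.rev : ℝ)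
          ≤ (kap j.rev : ℝ) + (lam j.rev : ℝ) := by
        have hinv1 : ((m (r + 1) : ℝ))⁻¹ ≤ 1 := by
          rw [inv_le_one_iff₀]; right; exact_mod_cast hM1 r
        nlinarith [Nat.cast_nonneg (α := ℝ) (kap j.rev)]
      calc y r i j = ((m (r + 1) : ℝ))⁻¹ * x (r + 1) i j := by simp [hy]
        _ ≤ _ := le_trans (hre ▸ hmul) hle2
  obtain ⟨a, ha, φ, hφ, hconv⟩ := isCompact_Icc.tendsto_subseq hybox
  -- auxiliary limits
  have hMtop : Filter.Tendsto (fun r => (m (φ r + 1) : ℝ)) Filter.atTop Filter.atTop := by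
    have hnat : Filter.Tendsto (fun r : ℕ => (r : ℝ)) Filter.atTop Filter.atTop :=
      tendsto_natCast_atTop_atTop
    refine Filter.tendsto_atTop_mono ?_ hnat
    intro r
    have : r ≤ m (φ r + 1) := le_trans (le_trans hφ.le_apply (Nat.le_succ _)) (hm (φ r + 1))
    exact_mod_cast this
  have hMinv0 : Filter.Tendsto (fun r => ((m (φ r + 1) : ℝ))⁻¹) Filter.atTop (nhds 0) :=
    hMtop.inv_tendsto_atTop
  have hdtend : ∀ d : DIdx n, Filter.Tendsto (fun r => dfun d (y (φ r))) Filter.atTop (nhds (dfun d a)) :=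
    fun d => ((dfun_continuous d).continuousAt.tendsto).comp hconv
  have hcoord : ∀ (i : Fin (n + 1)) (j : Fin n),
      Filter.Tendsto (fun r => y (φ r) i j) Filter.atTop (nhds (a i j)) := by
    intro i j
    have h1 := Filter.Tendsto.comp (continuous_apply i).continuousAt.tendsto hconv
    exact Filter.Tendsto.comp (continuous_apply j).continuousAt.tendsto h1
  -- the nonnegativity constraints in the limit
  have hGT : ∀ s, x s ∈ GTPolytope n (fun i => kap i + m s * lam i) (fun i => nu i + m s * mu i) := hx
  have hge : ∀ d : DIdx n, 0 ≤ dfun d a := by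
    intro d
    refine ge_of_tendsto' (hdtend d) ?_
    intro r
    have h0 : 0 ≤ dfun d (x (φ r + 1)) := ((mem_GT_iff _ _ _).1 (hGT (φ r + 1))).2.2 d
    have : dfun d (y (φ r)) = ((m (φ r + 1) : ℝ))⁻¹ * dfun d (x (φ r + 1)) := dfun_smul _ _ _
    rw [this]
    positivity
  -- tight constraints in the limit
  have htight : ∀ d ∈ T, dfun d a = 0 := by
    intro d hd
    have hle : dfun d a ≤ 0 := by
      have hgB : Filter.Tendsto (fun r => ((m (φ r + 1) : ℝ))⁻¹ * B) Filter.atTop (nhds 0) := by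
        simpa using hMinv0.mul_const B
      refine le_of_tendsto_of_tendsto' (hdtend d) hgB ?_
      intro r
      have hlt' : dfun d (x (φ r + 1)) < B := hlt (φ r + 1) d hd
      have : dfun d (y (φ r)) = ((m (φ r + 1) : ℝ))⁻¹ * dfun d (x (φ r + 1)) := dfun_smul _ _ _
      rw [this]
      exact mul_le_mul_of_nonneg_left hlt'.le (by positivity)
    exact le_antisymm hle (hge d)
  -- rows in the limit
  have htop : ∀ j : Fin n, a 0 j = (lam j.rev : ℝ) := by
    intro j
    have hval : ∀ r, y (φ r) 0 j = ((m (φ r + 1) : ℝ))⁻¹ * (kap j.rev : ℝ) + (lam j.rev : ℝ) := by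
      intro r
      have h1 := ((mem_GT_iff _ _ _).1 (hGT (φ r + 1))).1 j
      have h1' : x (φ r + 1) 0 j = (kap j.rev : ℝ) + (m (φ r + 1) : ℝ) * (lam j.rev : ℝ) := by
        rw [h1]; push_cast; ring
      have : y (φ r) 0 j = ((m (φ r + 1) : ℝ))⁻¹ * x (φ r + 1) 0 j := by simp [hy]
      rw [this, h1']
      field_simp
      rw [add_div, mul_div_cancel_left₀ _ (ne_of_gt (hMpos (φ r)))]
    have h2 : Filter.Tendsto (fun r => ((m (φ r + 1) : ℝ))⁻¹ * (kap j.rev : ℝ) + (lam j.rev : ℝ))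
        Filter.atTop (nhds ((lam j.rev : ℝ))) := by
      have := (hMinv0.mul_const ((kap j.rev : ℝ))).add_const ((lam j.rev : ℝ))
      simpa using this
    have h3 := hcoord 0 j
    rw [show (fun r => y (φ r) 0 j) = (fun r => ((m (φ r + 1) : ℝ))⁻¹ * (kap j.rev : ℝ) + (lam j.rev : ℝ)) from funext hval] at h3
    exact tendsto_nhds_unique h3 h2
  have hbot : ∀ j : Fin n, a (Fin.last n) j = (mu j.rev : ℝ) := by
    intro j
    have hval : ∀ r, y (φ r) (Fin.last n) j = ((m (φ r + 1) : ℝ))⁻¹ * (nu j.rev : ℝ) + (mu j.rev : ℝ) := by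
      intro r
      have h1 := ((mem_GT_iff _ _ _).1 (hGT (φ r + 1))).2.1 j
      have h1' : x (φ r + 1) (Fin.last n) j = (nu j.rev : ℝ) + (m (φ r + 1) : ℝ) * (mu j.rev : ℝ) := by
        rw [h1]; push_cast; ring
      have : y (φ r) (Fin.last n) j = ((m (φ r + 1) : ℝ))⁻¹ * x (φ r + 1) (Fin.last n) j := by simp [hy]
      rw [this, h1']
      field_simp
      rw [add_div, mul_div_cancel_left₀ _ (ne_of_gt (hMpos (φ r)))]
    have h2 : Filter.Tendsto (fun r => ((m (φ r + 1) : ℝ))⁻¹ * (nu j.rev : ℝ) + (mu j.rev : ℝ))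
        Filter.atTop (nhds ((mu j.rev : ℝ))) := by
      have := (hMinv0.mul_const ((nu j.rev : ℝ))).add_const ((mu j.rev : ℝ))
      simpa using this
    have h3 := hcoord (Fin.last n) j
    rw [show (fun r => y (φ r) (Fin.last n) j) = _ from funext hval] at h3
    exact tendsto_nhds_unique h3 h2
  have : a ∈ QT lam mu T := ⟨(mem_GT_iff _ _ _).2 ⟨htop, hbot, hge⟩, htight⟩
  rw [hQT] at this
  exact this

end SchurAux

namespace SchurAux

variable {n : ℕ}

lemma dfun_add (d : DIdx n) (x y : Fin (n + 1) → Fin n → ℝ) :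
    dfun d (x + y) = dfun d x + dfun d y := by
  cases d <;> simp [dfun] <;> ring

lemma isClosed_GT (α β : Fin n → ℕ) : IsClosed (GTPolytope n α β) := by
  have hco : ∀ (i : Fin (n + 1)) (j : Fin n),
      Continuous (fun x : Fin (n + 1) → Fin n → ℝ => x i j) :=
    fun i j => (continuous_apply j).comp (continuous_apply i)
  have h : GTPolytope n α β =
      (⋂ j : Fin n, {x : Fin (n + 1) → Fin n → ℝ | x 0 j = (α j.rev : ℝ)}) ∩
      ((⋂ j : Fin n, {x : Fin (n + 1) → Fin n → ℝ | x (Fin.last n) j = (β j.rev : ℝ)}) ∩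
       (⋂ d : DIdx n, {x : Fin (n + 1) → Fin n → ℝ | 0 ≤ dfun d x})) := by
    ext x
    rw [mem_GT_iff]
    simp [Set.mem_iInter, Set.mem_setOf_eq, and_assoc]
  rw [h]
  refine IsClosed.inter (isClosed_iInter fun j => isClosed_eq (hco 0 j) continuous_const)
    (IsClosed.inter (isClosed_iInter fun j => isClosed_eq (hco (Fin.last n) j) continuous_const)
      (isClosed_iInter fun d => isClosed_le continuous_const (dfun_continuous d)))

lemma isClosed_QT (lam mu : Fin n → ℕ) (T : Finset (DIdx n)) : IsClosed (QT lam mu T) := by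
  have h : QT lam mu T = GTPolytope n lam mu ∩
      (⋂ d : {d : DIdx n // d ∈ T}, {x : Fin (n + 1) → Fin n → ℝ | dfun d.1 x = 0}) := by
    ext x
    simp only [QT, Set.mem_setOf_eq, Set.mem_inter_iff, Set.mem_iInter, Subtype.forall]
  rw [h]
  exact (isClosed_GT lam mu).inter
    (isClosed_iInter fun d => isClosed_eq (dfun_continuous d.1) continuous_const)

lemma isCompact_QT (lam mu : Fin n → ℕ) (T : Finset (DIdx n)) : IsCompact (QT lam mu T) := by
  refine IsCompact.of_isClosed_subset (isCompact_Icc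
    (a := fun (_ : Fin (n + 1)) (j : Fin n) => ((mu j.rev : ℝ)))
    (b := fun (_ : Fin (n + 1)) (j : Fin n) => ((lam j.rev : ℝ)))) (isClosed_QT lam mu T) ?_
  intro x hx
  rw [Set.mem_Icc]
  constructor <;> rw [Pi.le_def] <;> intro i <;> rw [Pi.le_def] <;> intro j
  · exact (coord_bounds lam mu hx.1 i j).1
  · exact (coord_bounds lam mu hx.1 i j).2

lemma isExtreme_QT (lam mu : Fin n → ℕ) (T : Finset (DIdx n)) :
    IsExtreme ℝ (GTPolytope n lam mu) (QT lam mu T) := by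
  constructor
  · exact fun x hx => hx.1
  · rintro x1 hx1 x2 hx2 x hx hseg
    obtain ⟨a, b, ha, hb, hab, heq⟩ := hseg
    have hkey : ∀ d ∈ T, dfun d x1 = 0 ∧ dfun d x2 = 0 := by
      intro d hd
      have h1 : 0 ≤ dfun d x1 := ((mem_GT_iff _ _ _).1 hx1).2.2 d
      have h2 : 0 ≤ dfun d x2 := ((mem_GT_iff _ _ _).1 hx2).2.2 d
      have h0 : dfun d x = 0 := hx.2 d hd
      have hsum : a * dfun d x1 + b * dfun d x2 = 0 := by
        rw [← h0, ← heq, dfun_add, dfun_smul, dfun_smul]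
      constructor <;> nlinarith
    exact ⟨hx1, fun d hd => (hkey d hd).1⟩

lemma cone_lemma (kap lam mu nu : Fin n → ℕ) (R : ℕ)
    (v : Fin R → (Fin (n + 1) → Fin n → ℤ))
    (hvert : Set.extremePoints ℝ (GTPolytope n lam mu) = Set.range (fun i => patC (v i)))
    (C : ℤ) :
    ∃ r : ℕ, ∀ m : ℕ, r ≤ m →
      ∀ p, IsPat (fun i => kap i + m * lam i) (fun i => nu i + m * mu i) p →
        ∃ istar : Fin R, ∀ d : DIdx n,
          dint d (v istar) = 0 ∨ ((R : ℤ) + 1) * C ≤ dint d p := by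
  classical
  have hch : ∀ T : Finset (DIdx n), ∃ rT : ℕ, QT lam mu T = ∅ → ∀ m : ℕ, rT ≤ m →
      ∀ x ∈ GTPolytope n (fun i => kap i + m * lam i) (fun i => nu i + m * mu i),
        ∃ d ∈ T, ((((R : ℤ) + 1) * C : ℤ) : ℝ) ≤ dfun d x := by
    intro T
    by_cases hT : QT lam mu T = ∅
    · obtain ⟨r, hr⟩ := exists_r_of_QT_empty kap lam mu nu T ((((R : ℤ) + 1) * C : ℤ) : ℝ) hT
      exact ⟨r, fun _ => hr⟩
    · exact ⟨0, fun h => absurd h hT⟩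
  choose rT hrT using hch
  refine ⟨Finset.univ.sup rT, fun m hm p hp => ?_⟩
  set T : Finset (DIdx n) := Finset.univ.filter (fun d => dint d p < ((R : ℤ) + 1) * C) with hTdef
  have hTne : QT lam mu T ≠ ∅ := by
    intro h
    obtain ⟨d, hdT, hdB⟩ := hrT T h m (le_trans (Finset.le_sup (Finset.mem_univ T)) hm)
      (patC p) ((isPat_iff _ _ p).1 hp)
    rw [dfun_patC] at hdB
    have h1 : ((R : ℤ) + 1) * C ≤ dint d p := by exact_mod_cast hdB
    have h2 := (Finset.mem_filter.1 hdT).2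
    exact absurd h1 (not_le.2 h2)
  obtain ⟨e, he⟩ := (isCompact_QT lam mu T).extremePoints_nonempty
    (Set.nonempty_iff_ne_empty.2 hTne)
  have heQ : e ∈ Set.extremePoints ℝ (GTPolytope n lam mu) :=
    (isExtreme_QT lam mu T).extremePoints_subset_extremePoints he
  rw [hvert] at heQ
  obtain ⟨istar, histar⟩ := heQ
  refine ⟨istar, fun d => ?_⟩
  by_cases hd : dint d p < ((R : ℤ) + 1) * C
  · left
    have hdT : d ∈ T := Finset.mem_filter.2 ⟨Finset.mem_univ d, hd⟩
    have h0 : dfun d e = 0 := (extremePoints_subset he).2 d hdT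
    rw [← histar, dfun_patC] at h0
    exact_mod_cast h0
  · right
    exact not_lt.1 hd

end SchurAux

namespace SchurAux

variable {n : ℕ}

lemma fin_symm_apply (g : Fin n → ℕ) (a : Fin n) :
    (Finsupp.equivFunOnFinite.symm g) a = g a := by
  have h := Finsupp.equivFunOnFinite.apply_symm_apply g
  exact congrFun h a

lemma toNat_sum_nonneg {ι : Type*} (s : Finset ι) (f : ι → ℤ) :
    (∀ i ∈ s, 0 ≤ f i) → (∑ i ∈ s, f i).toNat = ∑ i ∈ s, (f i).toNat := by
  classical
  induction s using Finset.induction with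
  | empty => intro _; simp
  | @insert a s ha ih =>
    intro h
    rw [Finset.sum_insert ha, Finset.sum_insert ha,
      ← ih (fun i hi => h i (Finset.mem_insert_of_mem hi))]
    have h1 : 0 ≤ f a := h a (Finset.mem_insert_self a s)
    have h2 : 0 ≤ ∑ i ∈ s, f i :=
      Finset.sum_nonneg fun i hi => h i (Finset.mem_insert_of_mem hi)
    omega

lemma gtWeightInt_sum {ι : Type*} (s : Finset ι) (f : ι → (Fin (n + 1) → Fin n → ℤ)) (j : Fin n) :
    gtWeightInt (∑ i ∈ s, f i) j = ∑ i ∈ s, gtWeightInt (f i) j := by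
  classical
  induction s using Finset.induction with
  | empty => simp [gtWeightInt]
  | @insert a s ha ih => rw [Finset.sum_insert ha, Finset.sum_insert ha, gtWeightInt_add, ih]

lemma dint_sub (d : DIdx n) (p q : Fin (n + 1) → Fin n → ℤ) :
    dint d (p - q) = dint d p - dint d q := by
  cases d <;> simp [dint] <;> ring

lemma main_algebra (kap lam mu nu : Fin n → ℕ) (R : ℕ)
    (v : Fin R → (Fin (n + 1) → Fin n → ℤ))
    (hvpat : ∀ i, IsPat lam mu (v i))
    (C : ℤ) (hC0 : 0 ≤ C) (hC : ∀ i d, dint d (v i) ≤ C)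
    (m : ℕ) (hRm : R ≤ m)
    (hcone : ∀ p, IsPat (fun i => kap i + m * lam i) (fun i => nu i + m * mu i) p →
      ∃ istar : Fin R, ∀ d : DIdx n, dint d (v istar) = 0 ∨ ((R : ℤ) + 1) * C ≤ dint d p) :
    ∑ I ∈ (Finset.univ : Finset (Fin R)).powerset,
      (MvPolynomial.monomial (Finsupp.equivFunOnFinite.symm
          (fun j => ∑ i ∈ I, (gtWeightInt (v i) j).toNat)) ((-1 : ℂ) ^ I.card)) *
        skewSchur n (fun i => kap i + (m - I.card) * lam i)
          (fun i => nu i + (m - I.card) * mu i) = 0 := by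
  classical
  set vS : Finset (Fin R) → (Fin (n + 1) → Fin n → ℤ) := fun I => ∑ i ∈ I, v i with hvS
  have hv0 : ∀ (d : DIdx n) (i : Fin R), 0 ≤ dint d (v i) := fun d i => (hvpat i).2.2 d
  have hcard : ∀ I : Finset (Fin R), I.card ≤ R := fun I => by
    simpa using Finset.card_le_card (Finset.subset_univ I)
  have hcm : ∀ I : Finset (Fin R), I.card ≤ m := fun I => le_trans (hcard I) hRm
  have hvd : ∀ (d : DIdx n) (I : Finset (Fin R)),
      dint d (vS I) = ∑ i ∈ I, dint d (v i) := fun d I => dint_sum d I v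
  have hvrow0 : ∀ (I : Finset (Fin R)) (j : Fin n),
      vS I 0 j = (I.card : ℤ) * (lam j.rev : ℤ) := by
    intro I j
    have : vS I 0 j = ∑ i ∈ I, v i 0 j := by
      simp [hvS, Finset.sum_apply]
    rw [this, Finset.sum_congr rfl (fun i _ => (hvpat i).1 j), Finset.sum_const,
      nsmul_eq_mul]
  have hvrowl : ∀ (I : Finset (Fin R)) (j : Fin n),
      vS I (Fin.last n) j = (I.card : ℤ) * (mu j.rev : ℤ) := by
    intro I j
    have : vS I (Fin.last n) j = ∑ i ∈ I, v i (Fin.last n) j := by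
      simp [hvS, Finset.sum_apply]
    rw [this, Finset.sum_congr rfl (fun i _ => (hvpat i).2.1 j), Finset.sum_const,
      nsmul_eq_mul]
  -- the translated pattern sets
  set B : Finset (Fin R) → Finset (Fin (n + 1) → Fin n → ℤ) := fun I =>
    (patFinset (fun i => kap i + (m - I.card) * lam i)
      (fun i => nu i + (m - I.card) * mu i)).image (· + vS I) with hB
  -- membership characterization
  have hmemB : ∀ (I : Finset (Fin R)) (p : Fin (n + 1) → Fin n → ℤ),
      p ∈ B I ↔ (IsPat (fun i => kap i + m * lam i) (fun i => nu i + m * mu i) p ∧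
        ∀ d : DIdx n, dint d (vS I) ≤ dint d p) := by
    intro I p
    have hcast : ((m - I.card : ℕ) : ℤ) = (m : ℤ) - (I.card : ℤ) := by
      exact_mod_cast Nat.cast_sub (hcm I)
    constructor
    · intro hp
      obtain ⟨q, hq, hqp⟩ := Finset.mem_image.1 hp
      rw [mem_patFinset] at hq
      obtain ⟨hq1, hq2, hq3⟩ := hq
      subst hqp
      refine ⟨⟨fun j => ?_, fun j => ?_, fun d => ?_⟩, fun d => ?_⟩
      · have := hq1 j
        simp only [Pi.add_apply] at *
        rw [this, hvrow0 I j]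
        push_cast [hcast]
        ring
      · have := hq2 j
        simp only [Pi.add_apply] at *
        rw [this, hvrowl I j]
        push_cast [hcast]
        ring
      · rw [dint_add]
        have := hq3 d
        have h2 : 0 ≤ dint d (vS I) := by
          rw [hvd]
          exact Finset.sum_nonneg fun i _ => hv0 d i
        linarith
      · rw [dint_add]
        have := hq3 d
        linarith
    · rintro ⟨⟨hp1, hp2, hp3⟩, hdom⟩
      rw [hB]
      refine Finset.mem_image.2 ⟨p - vS I, ?_, by abel⟩
      rw [mem_patFinset]
      refine ⟨fun j => ?_, fun j => ?_, fun d => ?_⟩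
      · simp only [Pi.sub_apply]
        rw [hp1 j, hvrow0 I j]
        push_cast [hcast]
        ring
      · simp only [Pi.sub_apply]
        rw [hp2 j, hvrowl I j]
        push_cast [hcast]
        ring
      · rw [dint_sub]
        have := hdom d
        linarith
  -- Step 1 : rewrite each summand as a sum over the translated pattern set
  have hstep1 : ∀ I : Finset (Fin R),
      (MvPolynomial.monomial (Finsupp.equivFunOnFinite.symm
          (fun j => ∑ i ∈ I, (gtWeightInt (v i) j).toNat)) ((-1 : ℂ) ^ I.card)) *
        skewSchur n (fun i => kap i + (m - I.card) * lam i)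
          (fun i => nu i + (m - I.card) * mu i)
      = ∑ p ∈ B I, MvPolynomial.monomial (wt p) ((-1 : ℂ) ^ I.card) := by
    intro I
    rw [skewSchur_eq, Finset.mul_sum]
    rw [hB]
    rw [Finset.sum_image (fun x _ y _ h => by
      exact add_left_injective (vS I) h)]
    refine Finset.sum_congr rfl fun q hq => ?_
    rw [MvPolynomial.monomial_mul, mul_one]
    rw [mem_patFinset] at hq
    have hexp : (Finsupp.equivFunOnFinite.symm
        fun j => ∑ i ∈ I, (gtWeightInt (v i) j).toNat) + wt q = wt (q + vS I) := by
      ext a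
      rw [Finsupp.add_apply]
      simp only [wt, fin_symm_apply]
      have hsplit : gtWeightInt (q + vS I) a = gtWeightInt q a + ∑ i ∈ I, gtWeightInt (v i) a := by
        rw [gtWeightInt_add, gtWeightInt_sum]
      rw [hsplit]
      have h1 : 0 ≤ gtWeightInt q a := gtWeightInt_nonneg hq a
      have h2 : ∀ i ∈ I, 0 ≤ gtWeightInt (v i) a := fun i _ => gtWeightInt_nonneg (hvpat i) a
      have h3 : 0 ≤ ∑ i ∈ I, gtWeightInt (v i) a := Finset.sum_nonneg h2
      rw [show (gtWeightInt q a + ∑ i ∈ I, gtWeightInt (v i) a).toNat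
          = (∑ i ∈ I, gtWeightInt (v i) a).toNat + (gtWeightInt q a).toNat by omega]
      rw [toNat_sum_nonneg I _ h2]
    rw [hexp]
  -- Step 2 : inclusion-exclusion over a common index set
  set P : Finset (Fin (n + 1) → Fin n → ℤ) :=
    (Finset.univ : Finset (Fin R)).powerset.biUnion B with hP
  have hBP : ∀ I ∈ (Finset.univ : Finset (Fin R)).powerset, B I ⊆ P :=
    fun I hI => Finset.subset_biUnion_of_mem B hI
  have hstep2 : ∀ I ∈ (Finset.univ : Finset (Fin R)).powerset,
      ∑ p ∈ B I, MvPolynomial.monomial (wt p) ((-1 : ℂ) ^ I.card)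
      = ∑ p ∈ P, if p ∈ B I then MvPolynomial.monomial (wt p) ((-1 : ℂ) ^ I.card) else 0 := by
    intro I hI
    rw [Finset.sum_ite_mem, Finset.inter_eq_right.2 (hBP I hI)]
  -- the inner alternating sums vanish
  have hKKzero : ∀ p ∈ P,
      ∑ I ∈ (Finset.univ : Finset (Fin R)).powerset.filter (fun I => p ∈ B I),
        ((-1 : ℂ)) ^ I.card = 0 := by
    intro p hp
    obtain ⟨I₀, hI₀, hpI₀⟩ := Finset.mem_biUnion.1 hp
    have hppat := ((hmemB I₀ p).1 hpI₀).1
    obtain ⟨istar, hist⟩ := hcone p hppat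
    refine Finset.sum_involution
      (fun I _ => if istar ∈ I then I.erase istar else insert istar I) ?_ ?_ ?_ ?_
    · intro I _
      by_cases h : istar ∈ I
      · simp only [if_pos h]
        have hc : (I.erase istar).card + 1 = I.card := Finset.card_erase_add_one h
        rw [← hc, pow_succ]
        ring
      · simp only [if_neg h]
        rw [Finset.card_insert_of_notMem h, pow_succ]
        ring
    · intro I _ _
      by_cases h : istar ∈ I
      · simp only [if_pos h]
        exact Finset.erase_ne_self.2 h
      · simp only [if_neg h]
        exact Finset.insert_ne_self.2 h
    · intro I hI
      have hIm := Finset.mem_filter.1 hI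
      obtain ⟨hppat', hdom⟩ := (hmemB I p).1 hIm.2
      by_cases h : istar ∈ I
      · simp only [if_pos h]
        refine Finset.mem_filter.2 ⟨Finset.mem_powerset.2 (Finset.subset_univ _), ?_⟩
        refine (hmemB _ p).2 ⟨hppat', fun d => ?_⟩
        refine le_trans ?_ (hdom d)
        rw [hvd, hvd]
        exact Finset.sum_le_sum_of_subset_of_nonneg (Finset.erase_subset _ _)
          (fun i _ _ => hv0 d i)
      · simp only [if_neg h]
        refine Finset.mem_filter.2 ⟨Finset.mem_powerset.2 (Finset.subset_univ _), ?_⟩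
        refine (hmemB _ p).2 ⟨hppat', fun d => ?_⟩
        rw [hvd, Finset.sum_insert h, ← hvd]
        rcases hist d with h0 | hbig
        · rw [h0, zero_add]
          exact hdom d
        · have hb1 : dint d (vS I) ≤ (I.card : ℤ) * C := by
            rw [hvd]
            calc ∑ i ∈ I, dint d (v i) ≤ ∑ _i ∈ I, C := Finset.sum_le_sum fun i _ => hC i d
              _ = (I.card : ℤ) * C := by rw [Finset.sum_const, nsmul_eq_mul]
          have hb2 : (I.card : ℤ) * C ≤ (R : ℤ) * C := by
            have : (I.card : ℤ) ≤ (R : ℤ) := by exact_mod_cast hcard I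
            exact mul_le_mul_of_nonneg_right this hC0
          have hb3 : dint d (v istar) ≤ C := hC istar d
          have : ((R : ℤ) + 1) * C = (R : ℤ) * C + C := by ring
          linarith
    · intro I _
      by_cases h : istar ∈ I
      · simp only [if_pos h, if_neg (Finset.notMem_erase istar I)]
        exact Finset.insert_erase h
      · simp only [if_neg h, if_pos (Finset.mem_insert_self istar I)]
        exact Finset.erase_insert h
  -- put everything together
  calc ∑ I ∈ (Finset.univ : Finset (Fin R)).powerset,
        (MvPolynomial.monomial (Finsupp.equivFunOnFinite.symm
            (fun j => ∑ i ∈ I, (gtWeightInt (v i) j).toNat)) ((-1 : ℂ) ^ I.card)) *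
          skewSchur n (fun i => kap i + (m - I.card) * lam i)
            (fun i => nu i + (m - I.card) * mu i)
      = ∑ I ∈ (Finset.univ : Finset (Fin R)).powerset,
          ∑ p ∈ P, if p ∈ B I then MvPolynomial.monomial (wt p) ((-1 : ℂ) ^ I.card) else 0 := by
        refine Finset.sum_congr rfl fun I hI => ?_
        rw [hstep1 I, hstep2 I hI]
    _ = ∑ p ∈ P, ∑ I ∈ (Finset.univ : Finset (Fin R)).powerset,
          if p ∈ B I then MvPolynomial.monomial (wt p) ((-1 : ℂ) ^ I.card) else 0 :=
        Finset.sum_comm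
    _ = ∑ p ∈ P, MvPolynomial.monomial (wt p)
          (∑ I ∈ (Finset.univ : Finset (Fin R)).powerset.filter (fun I => p ∈ B I),
            ((-1 : ℂ)) ^ I.card) := by
        refine Finset.sum_congr rfl fun p _ => ?_
        rw [← Finset.sum_filter, map_sum]
    _ = 0 := by
        refine Finset.sum_eq_zero fun p hp => ?_
        rw [hKKzero p hp, map_zero]

end SchurAux

theorem schur_recursion_vertices (n : ℕ) (hn : 1 ≤ n)
    (kap lam mu nu : Fin n → ℕ)
    (hkap : Antitone kap) (hlam : Antitone lam) (hmu : Antitone mu) (hnu : Antitone nu)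
    (hml : ∀ i, mu i ≤ lam i)
    (k : ℕ) (hk : 0 < k) (hincl : ∀ i, nu i + k * mu i ≤ kap i + k * lam i)
    (R : ℕ) (v : Fin R → (Fin (n + 1) → Fin n → ℤ)) (hv : Function.Injective v)
    (hvert : Set.extremePoints ℝ (GTPolytope n lam mu) = Set.range (fun i => patC (v i))) :
    ∃ r : ℕ, ∀ l : ℕ, r ≤ l →
      skewSchur n (fun i => kap i + (l + R) * lam i) (fun i => nu i + (l + R) * mu i) =
        ∑ I ∈ (Finset.univ : Finset (Fin R)).powerset.filter (fun I => I.Nonempty),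
          MvPolynomial.monomial
              (Finsupp.equivFunOnFinite.symm
                (fun j => ∑ i ∈ I, (gtWeightInt (v i) j).toNat))
              ((-1 : ℂ) ^ (1 + I.card)) *
            skewSchur n (fun i => kap i + (l + R - I.card) * lam i)
              (fun i => nu i + (l + R - I.card) * mu i) := by
  classical
  have hvpat : ∀ i, SchurAux.IsPat lam mu (v i) := by
    intro i
    rw [SchurAux.isPat_iff]
    have hmem : patC (v i) ∈ Set.range (fun i => patC (v i)) := ⟨i, rfl⟩
    rw [← hvert] at hmem
    exact extremePoints_subset hmem
  set Cn : ℕ := (Finset.univ : Finset (Fin R × SchurAux.DIdx n)).sup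
      (fun pr => (SchurAux.dint pr.2 (v pr.1)).toNat) with hCn
  have hC0 : (0 : ℤ) ≤ (Cn : ℤ) := Int.ofNat_nonneg Cn
  have hC : ∀ (i : Fin R) (d : SchurAux.DIdx n), SchurAux.dint d (v i) ≤ (Cn : ℤ) := by
    intro i d
    have h1 : (SchurAux.dint d (v i)).toNat ≤ Cn :=
      Finset.le_sup (f := fun pr : Fin R × SchurAux.DIdx n => (SchurAux.dint pr.2 (v pr.1)).toNat)
        (Finset.mem_univ (i, d))
    exact le_trans (Int.self_le_toNat _) (by exact_mod_cast h1)
  obtain ⟨r, hr⟩ := SchurAux.cone_lemma kap lam mu nu R v hvert (Cn : ℤ)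
  refine ⟨r, fun l hl => ?_⟩
  have hmain := SchurAux.main_algebra kap lam mu nu R v hvpat (Cn : ℤ) hC0 hC (l + R)
      (Nat.le_add_left R l) (hr (l + R) (le_trans hl (Nat.le_add_right l R)))
  rw [← Finset.sum_filter_add_sum_filter_not ((Finset.univ : Finset (Fin R)).powerset)
      (fun I => I.Nonempty)] at hmain
  have hempty : ((Finset.univ : Finset (Fin R)).powerset).filter
      (fun I => ¬I.Nonempty) = {(∅ : Finset (Fin R))} := by
    ext I
    simp [Finset.not_nonempty_iff_eq_empty]
  rw [hempty, Finset.sum_singleton] at hmain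
  have h0exp : (Finsupp.equivFunOnFinite.symm
      (fun j => ∑ i ∈ (∅ : Finset (Fin R)), (gtWeightInt (v i) j).toNat)) = (0 : Fin n →₀ ℕ) := by
    ext a
    rw [SchurAux.fin_symm_apply]
    simp
  rw [h0exp] at hmain
  simp only [Finset.card_empty, pow_zero, Nat.sub_zero, MvPolynomial.monomial_zero', map_one,
    one_mul] at hmain
  have hneg : ∀ I ∈ ((Finset.univ : Finset (Fin R)).powerset).filter (fun I => I.Nonempty),
      MvPolynomial.monomial
          (Finsupp.equivFunOnFinite.symm (fun j => ∑ i ∈ I, (gtWeightInt (v i) j).toNat))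
          ((-1 : ℂ) ^ (1 + I.card)) *
        skewSchur n (fun i => kap i + (l + R - I.card) * lam i)
          (fun i => nu i + (l + R - I.card) * mu i)
      = -(MvPolynomial.monomial
          (Finsupp.equivFunOnFinite.symm (fun j => ∑ i ∈ I, (gtWeightInt (v i) j).toNat))
          ((-1 : ℂ) ^ I.card) *
        skewSchur n (fun i => kap i + (l + R - I.card) * lam i)
          (fun i => nu i + (l + R - I.card) * mu i)) := by
    intro I _
    have hp : ((-1 : ℂ)) ^ (1 + I.card) = -((-1 : ℂ) ^ I.card) := by
      rw [pow_add, pow_one]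
      ring
    rw [hp, map_neg, neg_mul]
  rw [Finset.sum_congr rfl hneg, Finset.sum_neg_distrib]
  linear_combination hmain
end
end

section
/- Let n = 3, λ = (5,3,1) and μ = (3,0,0). Then: (i) there exists an integral Gelfand–Tsetlin pattern p ∈ GT_{λ/μ} ∩ ℤ^{4×3} with weight w(p) = (4,2,0) (for instance the pattern with rows (1,3,5), (0,1,4), (0,0,3), (0,0,3)); (ii) (4,2,0) dominates (3,2,1), i.e. 4 ≥ 3, 4+2 ≥ 3+2 and 4+2+0 = 3+2+1; yet (iii) no extreme point v of GT_{λ/μ} has weight w(v) = (4,2,0). -/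
open scoped BigOperators Pointwise

noncomputable section

theorem counterexample_weight_not_vertex_weight :
    (∃ p : Fin 4 → Fin 3 → ℤ,
        patC p ∈ GTPolytope 3 ![5, 3, 1] ![3, 0, 0] ∧ gtWeightInt p = ![4, 2, 0]) ∧
    ((3 : ℕ) ≤ 4 ∧ (3 + 2 : ℕ) ≤ 4 + 2 ∧ (4 + 2 + 0 : ℕ) = 3 + 2 + 1) ∧
    (∀ x ∈ Set.extremePoints ℝ (GTPolytope 3 ![5, 3, 1] ![3, 0, 0]),
      gtWeight x ≠ ![4, 2, 0]) := by
  refine ⟨?_, ⟨by norm_num, by norm_num, by norm_num⟩, ?_⟩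
  · refine ⟨![![1,3,5],![0,1,4],![0,0,3],![0,0,3]], ⟨?_, ?_, ?_, ?_⟩, ?_⟩
    · intro j; fin_cases j <;> norm_num [patC, Fin.rev]
    · intro j; fin_cases j <;> norm_num [patC, Fin.rev, Fin.last]
    · intro i j; fin_cases i <;> fin_cases j <;>
        norm_num [patC, Matrix.vecHead, Matrix.vecTail, Matrix.cons_val_two]
    · intro i j h; fin_cases i <;> fin_cases j <;> revert h <;>
        norm_num [patC, Matrix.vecHead, Matrix.vecTail, Matrix.cons_val_two]
    · decide
  ·
    rintro x ⟨⟨htop, hbot, hdown, hup⟩, hext⟩ hw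
    -- boundary values
    have t0 : x 0 0 = 1 := by have := htop 0; norm_num [Fin.rev] at this; exact this
    have t1 : x 0 1 = 3 := by have := htop 1; norm_num [Fin.rev] at this; exact this
    have t2 : x 0 2 = 5 := by have := htop 2; norm_num [Fin.rev] at this; exact this
    have b0 : x 3 0 = 0 := by have := hbot 0; norm_num [Fin.rev, Fin.last] at this; exact this
    have b1 : x 3 1 = 0 := by have := hbot 1; norm_num [Fin.rev, Fin.last] at this; exact this
    have b2 : x 3 2 = 3 := by have := hbot 2; norm_num [Fin.rev, Fin.last] at this; exact this
    -- inequalities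
    have d00 : x 1 0 ≤ x 0 0 := hdown 0 0
    have d01 : x 1 1 ≤ x 0 1 := hdown 0 1
    have d02 : x 1 2 ≤ x 0 2 := hdown 0 2
    have d10 : x 2 0 ≤ x 1 0 := hdown 1 0
    have d11 : x 2 1 ≤ x 1 1 := hdown 1 1
    have d12 : x 2 2 ≤ x 1 2 := hdown 1 2
    have d20 : x 3 0 ≤ x 2 0 := hdown 2 0
    have d21 : x 3 1 ≤ x 2 1 := hdown 2 1
    have d22 : x 3 2 ≤ x 2 2 := hdown 2 2
    have u00 : x 0 0 ≤ x 1 1 := hup 0 0 (by norm_num)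
    have u01 : x 0 1 ≤ x 1 2 := hup 0 1 (by norm_num)
    have u10 : x 1 0 ≤ x 2 1 := hup 1 0 (by norm_num)
    have u11 : x 1 1 ≤ x 2 2 := hup 1 1 (by norm_num)
    have u20 : x 2 0 ≤ x 3 1 := hup 2 0 (by norm_num)
    have u21 : x 2 1 ≤ x 3 2 := hup 2 1 (by norm_num)
    -- weights
    have w0 : x 0 0 + x 0 1 + x 0 2 - (x 1 0 + x 1 1 + x 1 2) = 4 := by
      have := congrFun hw 0; simpa [gtWeight, Fin.sum_univ_three] using this
    have w1 : x 1 0 + x 1 1 + x 1 2 - (x 2 0 + x 2 1 + x 2 2) = 2 := by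
      have := congrFun hw 1; simpa [gtWeight, Fin.sum_univ_three] using this
    have hd : x 2 0 = 0 := le_antisymm (by linarith) (by linarith)
    have habc : x 1 0 + x 1 1 + x 1 2 = 5 := by linarith
    have he : x 2 1 = 0 := le_antisymm (by linarith) (by linarith)
    have hf : x 2 2 = 3 := by linarith
    have ha : x 1 0 = 0 := le_antisymm (by linarith) (by linarith)
    have hbge : (1:ℝ) ≤ x 1 1 := by linarith
    have hcge : (3:ℝ) ≤ x 1 2 := by linarith
    have hble : x 1 1 ≤ 3 := by linarith
    have F41 : ((⟨1, by norm_num⟩ : Fin 4)) = 1 := rfl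
    have F42 : ((⟨2, by norm_num⟩ : Fin 4)) = 2 := rfl
    have F43 : ((⟨3, by norm_num⟩ : Fin 4)) = 3 := rfl
    have F31 : ((⟨1, by norm_num⟩ : Fin 3)) = 1 := rfl
    have S0 : Fin.succ (0:Fin 3) = (1:Fin 4) := rfl
    have S1 : Fin.succ (1:Fin 3) = (2:Fin 4) := rfl
    have S2 : Fin.succ (2:Fin 3) = (3:Fin 4) := rfl
    have C0 : Fin.castSucc (0:Fin 3) = (0:Fin 4) := rfl
    have C1 : Fin.castSucc (1:Fin 3) = (1:Fin 4) := rfl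
    have C2 : Fin.castSucc (2:Fin 3) = (2:Fin 4) := rfl
    have N31 : ((3:Fin 4) = 1) ↔ False := by decide
    have F32 : ((⟨2, by norm_num⟩ : Fin 3)) = 2 := rfl
    rcases lt_or_ge 3 (x 1 2) with hc | hc
    · -- perturb c = x 1 2
      set y : Fin 4 → Fin 3 → ℝ := fun i j => if i = 1 ∧ j = 2 then 3 else x i j with hy
      set z : Fin 4 → Fin 3 → ℝ := fun i j => if i = 1 ∧ j = 2 then 2 * x 1 2 - 3 else x i j with hz
      have hcle : x 1 2 ≤ 5 := by linarith
      have hyM : y ∈ GTPolytope 3 ![5, 3, 1] ![3, 0, 0] := by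
        refine ⟨?_, ?_, ?_, ?_⟩
        · intro j; simp only [hy]; norm_num; exact htop j
        · intro j; simp only [hy]; norm_num [Fin.last]; exact hbot j
        · intro i j; fin_cases i <;> fin_cases j <;>
            simp only [hy, F41, F42, F43, F31, F32, S0, S1, S2, C0, C1, C2, N31, if_false] <;> norm_num [Fin.ext_iff, Fin.val_natCast] <;> linarith
        · intro i j h; fin_cases i <;> fin_cases j <;>
            simp only [hy, F41, F42, F43, F31, F32, S0, S1, S2, C0, C1, C2, N31, if_false] <;> revert h <;> norm_num [Fin.ext_iff, Fin.val_natCast] <;> linarith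
      have hzM : z ∈ GTPolytope 3 ![5, 3, 1] ![3, 0, 0] := by
        refine ⟨?_, ?_, ?_, ?_⟩
        · intro j; simp only [hz]; norm_num; exact htop j
        · intro j; simp only [hz]; norm_num [Fin.last]; exact hbot j
        · intro i j; fin_cases i <;> fin_cases j <;>
            simp only [hz, F41, F42, F43, F31, F32, S0, S1, S2, C0, C1, C2, N31, if_false] <;> norm_num [Fin.ext_iff, Fin.val_natCast] <;> linarith
        · intro i j h; fin_cases i <;> fin_cases j <;>
            simp only [hz, F41, F42, F43, F31, F32, S0, S1, S2, C0, C1, C2, N31, if_false] <;> revert h <;> norm_num [Fin.ext_iff, Fin.val_natCast] <;> linarith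
      have hseg : x ∈ openSegment ℝ y z := by
        refine ⟨1/2, 1/2, by norm_num, by norm_num, by norm_num, ?_⟩
        funext i j
        by_cases hij : i = 1 ∧ j = 2
        · obtain ⟨hi, hj⟩ := hij; subst hi; subst hj
          simp only [hy, hz, Pi.add_apply, Pi.smul_apply, smul_eq_mul]
          norm_num; ring
        · simp only [hy, hz, Pi.add_apply, Pi.smul_apply, smul_eq_mul, if_neg hij]
          ring
      have := hext hyM hzM hseg
      have h12 := congrFun (congrFun this 1) 2
      simp only [hy] at h12; norm_num at h12; linarith
    · -- c = 3, b = 2; perturb b = x 1 1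
      have hc3 : x 1 2 = 3 := le_antisymm hc hcge
      have hb2 : x 1 1 = 2 := by linarith
      set y : Fin 4 → Fin 3 → ℝ := fun i j => if i = 1 ∧ j = 1 then 1 else x i j with hy
      set z : Fin 4 → Fin 3 → ℝ := fun i j => if i = 1 ∧ j = 1 then 3 else x i j with hz
      have hyM : y ∈ GTPolytope 3 ![5, 3, 1] ![3, 0, 0] := by
        refine ⟨?_, ?_, ?_, ?_⟩
        · intro j; simp only [hy]; norm_num; exact htop j
        · intro j; simp only [hy]; norm_num [Fin.last]; exact hbot j
        · intro i j; fin_cases i <;> fin_cases j <;>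
            simp only [hy, F41, F42, F43, F31, F32, S0, S1, S2, C0, C1, C2, N31, if_false] <;> norm_num [Fin.ext_iff, Fin.val_natCast] <;> linarith
        · intro i j h; fin_cases i <;> fin_cases j <;>
            simp only [hy, F41, F42, F43, F31, F32, S0, S1, S2, C0, C1, C2, N31, if_false] <;> revert h <;> norm_num [Fin.ext_iff, Fin.val_natCast] <;> linarith
      have hzM : z ∈ GTPolytope 3 ![5, 3, 1] ![3, 0, 0] := by
        refine ⟨?_, ?_, ?_, ?_⟩
        · intro j; simp only [hz]; norm_num; exact htop j
        · intro j; simp only [hz]; norm_num [Fin.last]; exact hbot j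
        · intro i j; fin_cases i <;> fin_cases j <;>
            simp only [hz, F41, F42, F43, F31, F32, S0, S1, S2, C0, C1, C2, N31, if_false] <;> norm_num [Fin.ext_iff, Fin.val_natCast] <;> linarith
        · intro i j h; fin_cases i <;> fin_cases j <;>
            simp only [hz, F41, F42, F43, F31, F32, S0, S1, S2, C0, C1, C2, N31, if_false] <;> revert h <;> norm_num [Fin.ext_iff, Fin.val_natCast] <;> linarith
      have hseg : x ∈ openSegment ℝ y z := by
        refine ⟨1/2, 1/2, by norm_num, by norm_num, by norm_num, ?_⟩
        funext i j
        by_cases hij : i = 1 ∧ j = 1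
        · obtain ⟨hi, hj⟩ := hij; subst hi; subst hj
          simp only [hy, hz, Pi.add_apply, Pi.smul_apply, smul_eq_mul]
          norm_num; linarith
        · simp only [hy, hz, Pi.add_apply, Pi.smul_apply, smul_eq_mul, if_neg hij]
          ring
      have := hext hyM hzM hseg
      have h11 := congrFun (congrFun this 1) 1
      simp only [hy] at h11; norm_num at h11; linarith
end
end

section
/- For integers d ≥ 1 and m ≥ d, the indicator function identity 𝟙_{mΔ_{d−1}} = Σ_{∅≠I⊆[d]} (−1)^{1+|I|} · 𝟙_{(m−|I|)Δ_{d−1} + Σ_{i∈I} e_i} holds pointwise on ℝ^d (as real-valued functions), where Δ_{d−1} is the standard simplex, e_1,…,e_d are the standard basis vectors, and (m−|I|)Δ_{d−1} + Σ_{i∈I} e_i denotes the translate of the dilate (m−|I|)Δ_{d−1} by the vector Σ_{i∈I} e_i. -/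
open scoped BigOperators Pointwise

noncomputable section

/-- The `m`-th dilate of the standard simplex:
`mΔ_{d-1} = {x ∈ ℝ^d : x_1 + ⋯ + x_d = m, x ≥ 0}`. -/
def dilSimplex (d m : ℕ) : Set (Fin d → ℝ) :=
  {x | ∑ i, x i = (m : ℝ) ∧ ∀ i, 0 ≤ x i}

theorem dilated_simplex_indicator_recursion (d : ℕ) (hd : 1 ≤ d) (m : ℕ) (hm : d ≤ m)
    (x : Fin d → ℝ) :
    Set.indicator (dilSimplex d m) (fun _ => (1 : ℝ)) x =
      ∑ I ∈ (Finset.univ : Finset (Fin d)).powerset.filter (fun I => I.Nonempty),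
        (-1 : ℝ) ^ (1 + I.card) *
          Set.indicator (dilSimplex d (m - I.card) + {∑ i ∈ I, Pi.single i (1 : ℝ)})
            (fun _ => (1 : ℝ)) x := by
  -- characterize membership in the translated dilate
  have key : ∀ I : Finset (Fin d),
      x ∈ dilSimplex d (m - I.card) + {∑ i ∈ I, Pi.single i (1 : ℝ)} ↔
        (x ∈ dilSimplex d m ∧ ∀ i ∈ I, 1 ≤ x i) := by
    intro I
    have hIm : I.card ≤ m := le_trans (by simpa using Finset.card_le_univ I) hm
    set v : Fin d → ℝ := ∑ i ∈ I, Pi.single i (1 : ℝ) with hvdef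
    have hv : ∀ j, v j = if j ∈ I then 1 else 0 := by
      intro j
      simp [hvdef, Finset.sum_apply, Pi.single_apply, Finset.sum_ite_eq I j (fun _ => (1:ℝ))]
    have hsv : ∑ j, v j = (I.card : ℝ) := by
      simp only [hv]
      rw [Finset.sum_ite_mem, Finset.univ_inter, Finset.sum_const, nsmul_eq_mul, mul_one]
    have hmem : x ∈ dilSimplex d (m - I.card) + {v} ↔ x - v ∈ dilSimplex d (m - I.card) := by
      rw [Set.add_singleton]
      constructor
      · rintro ⟨a, ha, rfl⟩; simpa using ha
      · intro h; exact ⟨x - v, h, by simp⟩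
    rw [hmem]
    simp only [dilSimplex, Set.mem_setOf_eq, Pi.sub_apply]
    rw [Finset.sum_sub_distrib, hsv, Nat.cast_sub hIm]
    constructor
    · rintro ⟨h1, h2⟩
      have hsum : ∑ i, x i = (m : ℝ) := by linarith
      refine ⟨⟨hsum, fun j => ?_⟩, fun j hj => ?_⟩
      · have := h2 j
        rw [hv j] at this
        by_cases hj : j ∈ I <;> simp [hj] at this <;> linarith
      · have := h2 j; rw [hv j] at this; simp [hj] at this; linarith
    · rintro ⟨⟨h1, h2⟩, h3⟩
      refine ⟨by rw [h1], fun j => ?_⟩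
      rw [hv j]
      by_cases hj : j ∈ I
      · simp [hj]; linarith [h3 j hj]
      · simp [hj]; exact h2 j
  by_cases hxB : x ∈ dilSimplex d m
  · rw [Set.indicator_of_mem hxB]
    set S : Finset (Fin d) := Finset.univ.filter (fun i => 1 ≤ x i) with hS
    have hterm : ∀ I : Finset (Fin d),
        Set.indicator (dilSimplex d (m - I.card) + {∑ i ∈ I, Pi.single i (1 : ℝ)})
          (fun _ => (1 : ℝ)) x = if I ⊆ S then 1 else 0 := by
      intro I
      by_cases hIS : I ⊆ S
      · rw [if_pos hIS, Set.indicator_of_mem]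
        rw [key I]
        exact ⟨hxB, fun i hi => (Finset.mem_filter.mp (hIS hi)).2⟩
      · rw [if_neg hIS, Set.indicator_of_notMem]
        rw [key I]
        rintro ⟨-, h⟩
        exact hIS fun i hi => Finset.mem_filter.mpr ⟨Finset.mem_univ i, h i hi⟩
    simp only [hterm]
    -- restrict sum to subsets of S
    have hsub : (S.powerset.filter (fun I => I.Nonempty)) ⊆
        ((Finset.univ : Finset (Fin d)).powerset.filter (fun I => I.Nonempty)) := by
      intro I hI
      simp only [Finset.mem_filter, Finset.mem_powerset] at hI ⊢
      exact ⟨Finset.subset_univ I, hI.2⟩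
    rw [← Finset.sum_subset hsub]
    · have hSne : S.Nonempty := by
        by_contra h
        rw [Finset.not_nonempty_iff_eq_empty] at h
        have hall : ∀ i, x i < 1 := by
          intro i
          by_contra hc
          push_neg at hc
          have : i ∈ S := Finset.mem_filter.mpr ⟨Finset.mem_univ i, hc⟩
          simp [h] at this
        have hlt : ∑ i, x i < ∑ _i : Fin d, (1:ℝ) := by
          apply Finset.sum_lt_sum_of_nonempty
          · exact Finset.univ_nonempty_iff.mpr (Fin.pos_iff_nonempty.mp hd)
          · intro i _; exact hall i
        rw [hxB.1] at hlt
        simp at hlt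
        have : (m:ℝ) < d := by exact_mod_cast lt_of_lt_of_le hlt (le_refl _)
        have : (d:ℝ) ≤ m := by exact_mod_cast hm
        linarith
      have h1 : ∀ I ∈ S.powerset.filter (fun I => I.Nonempty),
          (-1:ℝ)^(1+I.card) * (if I ⊆ S then 1 else 0) = -((-1:ℝ)^I.card) := by
        intro I hI
        simp only [Finset.mem_filter, Finset.mem_powerset] at hI
        rw [if_pos hI.1, mul_one, pow_add, pow_one]
        ring
      rw [Finset.sum_congr rfl h1]
      have hsplit : ∑ I ∈ S.powerset, (-1:ℝ)^I.card = 0 := by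
        have := Finset.sum_powerset_neg_one_pow_card (α := Fin d) (x := S)
        rw [if_neg (Finset.nonempty_iff_ne_empty.mp hSne)] at this
        exact_mod_cast congrArg (Int.cast : ℤ → ℝ) this
      have hfilter : S.powerset.filter (fun I => ¬ I.Nonempty) = {∅} := by
        ext I
        simp only [Finset.mem_filter, Finset.mem_powerset, Finset.not_nonempty_iff_eq_empty,
          Finset.mem_singleton]
        exact ⟨fun h => h.2, fun h => ⟨h ▸ Finset.empty_subset S, h⟩⟩
      have := Finset.sum_filter_add_sum_filter_not S.powerset (fun I => I.Nonempty)
        (fun I => (-1:ℝ)^I.card)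
      rw [hfilter] at this
      simp only [Finset.sum_singleton, Finset.card_empty, pow_zero] at this
      rw [hsplit] at this
      have h2 : ∑ I ∈ S.powerset.filter (fun I => I.Nonempty), (-1:ℝ)^I.card = -1 := by
        linarith
      rw [Finset.sum_neg_distrib, h2]; norm_num
    · intro I hI hnI
      simp only [Finset.mem_filter, Finset.mem_powerset] at hI hnI
      push_neg at hnI
      rw [if_neg fun h => (Finset.nonempty_iff_ne_empty.mp hI.2) (hnI h), mul_zero]
  · rw [Set.indicator_of_notMem hxB]
    symm
    apply Finset.sum_eq_zero
    intro I hI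
    rw [Set.indicator_of_notMem, mul_zero]
    rw [key I]
    rintro ⟨h, -⟩
    exact hxB h
end
end
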